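/- Let b : E → ℝ≥0 be a function on the edge set E of a graph on [n] with |E| ≤ n²/4, and suppose that for every forest F ⊆ E, ∑_{e∈F} b(e) ≤ C·q. Then ∑_{e∈E} b(e)² ≤ C'·q²·log n for some constant C' depending only on C. -/

import Mathlib

open scoped Classical

lemma star_acyclic {V : Type*} {F : SimpleGraph V} {v : V}
    (h : ∀ e ∈ F.edgeSet, v ∈ e) : F.IsAcyclic := by
  intro u c hc
  have h3 := hc.three_le_length
  match c with
  | .nil => simp at h3
  | .cons a1 .nil => simp at h3
  | .cons a1 (.cons a2 .nil) => simp at h3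
  | @SimpleGraph.Walk.cons _ _ _ x1 _ a1 (@SimpleGraph.Walk.cons _ _ _ x2 _ a2 (@SimpleGraph.Walk.cons _ _ _ x3 _ a3 p)) =>
    have hnd := hc.isTrail.edges_nodup
    simp only [SimpleGraph.Walk.edges_cons, List.nodup_cons, List.mem_cons] at hnd
    have e12 : s(u, x1) ≠ s(x1, x2) := fun hh => hnd.1 (Or.inl hh)
    have e23 : s(x1, x2) ≠ s(x2, x3) := fun hh => hnd.2.1 (Or.inl hh)
    have h1 := h _ (F.mem_edgeSet.2 a1)
    have h2 := h _ (F.mem_edgeSet.2 a2)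
    have h3' := h _ (F.mem_edgeSet.2 a3)
    rw [Sym2.mem_iff] at h1 h2 h3'
    rcases h2 with rfl | rfl
    · rcases h3' with hh | rfl
      · exact a2.ne hh
      · exact e23 (by rw [Sym2.eq_swap])
    · rcases h1 with rfl | hh
      · exact e12 (by rw [Sym2.eq_swap])
      · exact a2.ne hh.symm

lemma matching_acyclic {V : Type*} {F : SimpleGraph V}
    (h : ∀ e₁ ∈ F.edgeSet, ∀ e₂ ∈ F.edgeSet, e₁ ≠ e₂ → ∀ x, x ∈ e₁ → x ∉ e₂) :
    F.IsAcyclic := by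
  intro u c hc
  have h3 := hc.three_le_length
  match c with
  | .nil => simp at h3
  | .cons a1 .nil => simp at h3
  | @SimpleGraph.Walk.cons _ _ _ x1 _ a1 (@SimpleGraph.Walk.cons _ _ _ x2 _ a2 p) =>
    have hnd := hc.isTrail.edges_nodup
    simp only [SimpleGraph.Walk.edges_cons, List.nodup_cons, List.mem_cons] at hnd
    have e12 : s(u, x1) ≠ s(x1, x2) := fun hh => hnd.1 (Or.inl hh)
    exact h _ (F.mem_edgeSet.2 a1) _ (F.mem_edgeSet.2 a2) e12 x1
      (Sym2.mem_mk_right u x1) (Sym2.mem_mk_left x1 x2)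

lemma core {n : ℕ} (G : SimpleGraph (Fin n)) (b : Sym2 (Fin n) → ℝ) (C q β : ℝ)
    (hq : 0 ≤ C * q)
    (hF : ∀ F : SimpleGraph (Fin n), F ≤ G → F.IsAcyclic →
      ∑ e ∈ Finset.univ.filter (fun e => e ∈ F.edgeSet), b e ≤ C * q)
    (t : Finset (Sym2 (Fin n))) (ht : ∀ e ∈ t, e ∈ G.edgeSet)
    (hβ : 0 ≤ β) (hβt : ∀ e ∈ t, β ≤ b e) :
    β ^ 2 * t.card ≤ 2 * (C * q) ^ 2 := by
  -- helper: any acyclic sub-collection u of t gives β * u.card ≤ C * q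
  have helper : ∀ u : Finset (Sym2 (Fin n)), u ⊆ t →
      (SimpleGraph.fromEdgeSet (↑u : Set (Sym2 (Fin n)))).IsAcyclic →
      β * u.card ≤ C * q := by
    intro u hu hacy
    have hle : SimpleGraph.fromEdgeSet (↑u : Set (Sym2 (Fin n))) ≤ G := by
      calc SimpleGraph.fromEdgeSet (↑u : Set (Sym2 (Fin n)))
          ≤ SimpleGraph.fromEdgeSet G.edgeSet :=
            SimpleGraph.fromEdgeSet_mono (fun e he => ht e (hu (Finset.mem_coe.1 he)))
        _ = G := SimpleGraph.fromEdgeSet_edgeSet G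
    have hfe : Finset.univ.filter
        (fun e => e ∈ (SimpleGraph.fromEdgeSet (↑u : Set (Sym2 (Fin n)))).edgeSet) = u := by
      ext e
      simp only [Finset.mem_filter, Finset.mem_univ, true_and,
        SimpleGraph.edgeSet_fromEdgeSet, Set.mem_diff, Finset.mem_coe, Set.mem_setOf_eq]
      exact ⟨fun h => h.1, fun h => ⟨h, G.not_isDiag_of_mem_edgeSet (ht e (hu h))⟩⟩
    have hsum : ∑ e ∈ u, b e ≤ C * q := by
      rw [← hfe]; convert hF _ hle hacy
    have hlow : u.card • β ≤ ∑ e ∈ u, b e :=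
      Finset.card_nsmul_le_sum u b β (fun e he => hβt e (hu he))
    rw [nsmul_eq_mul] at hlow
    linarith [hlow, hsum]
  -- maximal matching
  set P : Finset (Sym2 (Fin n)) → Prop :=
    fun M => ∀ e₁ ∈ M, ∀ e₂ ∈ M, e₁ ≠ e₂ → ∀ x, x ∈ e₁ → x ∉ e₂ with hP
  obtain ⟨M, hMmem, hMmax⟩ := Finset.exists_max_image
    ((t.powerset).filter P) Finset.card ⟨∅, by simp [hP]⟩
  rw [Finset.mem_filter, Finset.mem_powerset] at hMmem
  obtain ⟨hMt, hMP⟩ := hMmem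
  -- every edge of t meets M
  have hmeet : ∀ e ∈ t, ∃ f ∈ M, ∃ x, x ∈ e ∧ x ∈ f := by
    intro e he
    by_contra hcon
    push_neg at hcon
    have heM : e ∉ M := fun h => hcon e h e.out.1 (Sym2.out_fst_mem e) (Sym2.out_fst_mem e)
    have hP' : P (insert e M) := by
      intro e₁ he₁ e₂ he₂ hne x hx1 hx2
      rcases Finset.mem_insert.1 he₁ with h1 | h1 <;>
        rcases Finset.mem_insert.1 he₂ with h2 | h2
      · exact hne (h1.trans h2.symm)
      · subst h1; exact hcon e₂ h2 x hx1 hx2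
      · subst h2; exact hcon e₁ h1 x hx2 hx1
      · exact hMP e₁ h1 e₂ h2 hne x hx1 hx2
    have : (insert e M).card ≤ M.card := by
      apply hMmax
      rw [Finset.mem_filter, Finset.mem_powerset]
      exact ⟨Finset.insert_subset he hMt, hP'⟩
    rw [Finset.card_insert_of_notMem heM] at this
    omega
  -- vertex cover W
  set W : Finset (Fin n) :=
    M.biUnion (fun f => Finset.univ.filter (fun w => w ∈ f)) with hW
  have hWcard : W.card ≤ 2 * M.card := by
    calc W.card ≤ ∑ f ∈ M, (Finset.univ.filter (fun w => w ∈ f)).card :=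
          Finset.card_biUnion_le
      _ ≤ ∑ f ∈ M, 2 := by
          apply Finset.sum_le_sum
          intro f _
          induction f using Sym2.inductionOn with
          | hf a c =>
            have : Finset.univ.filter (fun w => w ∈ s(a, c)) ⊆ {a, c} := by
              intro w hw
              simp only [Finset.mem_filter, Sym2.mem_iff] at hw
              simp [hw.2]
            refine (Finset.card_le_card this).trans ?_
            refine (Finset.card_insert_le a {c}).trans ?_
            simp
      _ = 2 * M.card := by rw [Finset.sum_const, smul_eq_mul, mul_comm]
  -- t covered by stars at W
  have htsub : t ⊆ W.biUnion (fun w => t.filter (fun e => w ∈ e)) := by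
    intro e he
    obtain ⟨f, hf, x, hxe, hxf⟩ := hmeet e he
    apply Finset.mem_biUnion.2
    refine ⟨x, ?_, Finset.mem_filter.2 ⟨he, hxe⟩⟩
    exact Finset.mem_biUnion.2 ⟨f, hf, Finset.mem_filter.2 ⟨Finset.mem_univ x, hxf⟩⟩
  have htcard : (t.card : ℝ) ≤ ∑ w ∈ W, ((t.filter (fun e => w ∈ e)).card : ℝ) := by
    have := (Finset.card_le_card htsub).trans Finset.card_biUnion_le
    exact_mod_cast this
  -- star bounds
  have hstar : ∀ w : Fin n, β * (t.filter (fun e => w ∈ e)).card ≤ C * q := by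
    intro w
    apply helper _ (Finset.filter_subset _ _)
    apply star_acyclic (v := w)
    intro e he
    rw [SimpleGraph.edgeSet_fromEdgeSet] at he
    have := he.1
    rw [Finset.mem_coe, Finset.mem_filter] at this
    exact this.2
  -- matching bound
  have hmatch : β * M.card ≤ C * q := by
    apply helper _ hMt
    apply matching_acyclic
    intro e₁ he₁ e₂ he₂ hne x hx1
    rw [SimpleGraph.edgeSet_fromEdgeSet] at he₁ he₂
    exact hMP e₁ he₁.1 e₂ he₂.1 hne x hx1
  -- combine
  have hβt' : β * t.card ≤ 2 * M.card * (C * q) := by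
    calc β * t.card ≤ β * ∑ w ∈ W, ((t.filter (fun e => w ∈ e)).card : ℝ) := by
          exact mul_le_mul_of_nonneg_left htcard hβ
      _ = ∑ w ∈ W, β * ((t.filter (fun e => w ∈ e)).card : ℝ) := Finset.mul_sum _ _ _
      _ ≤ ∑ w ∈ W, (C * q) := Finset.sum_le_sum (fun w _ => hstar w)
      _ = W.card * (C * q) := by rw [Finset.sum_const, nsmul_eq_mul]
      _ ≤ (2 * M.card) * (C * q) := by
          apply mul_le_mul_of_nonneg_right _ hq
          exact_mod_cast hWcard
  nlinarith [mul_le_mul_of_nonneg_left hβt' hβ, mul_le_mul_of_nonneg_left hmatch hq,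
    mul_nonneg hβ (Nat.cast_nonneg M.card)]

theorem stmt_18 (C : ℝ) (hC : 0 < C) :
    ∃ C' : ℝ, 0 < C' ∧
      ∀ (n : ℕ), 2 ≤ n → ∀ (G : SimpleGraph (Fin n)) (b : Sym2 (Fin n) → ℝ)
        (q : ℝ), 0 ≤ q → (∀ e, 0 ≤ b e) →
        G.edgeSet.ncard ≤ n^2 / 4 →
        (∀ F : SimpleGraph (Fin n), F ≤ G → F.IsAcyclic →
          ∑ e ∈ Finset.univ.filter (fun e => e ∈ F.edgeSet), b e ≤ C * q) →
        ∑ e ∈ Finset.univ.filter (fun e => e ∈ G.edgeSet), (b e)^2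
          ≤ C' * q^2 * Real.log n := by
  have hlog2 : 0 < Real.log 2 := Real.log_pos (by norm_num)
  refine ⟨2 * C ^ 2 * (2 + 1 / Real.log 2), by positivity, ?_⟩
  intro n hn G b q hq hb hE hF
  have hCq : 0 ≤ C * q := mul_nonneg hC.le hq
  set s : Finset (Sym2 (Fin n)) := Finset.univ.filter (fun e => e ∈ G.edgeSet) with hs
  set m := s.card with hm
  set g : Fin m → Sym2 (Fin n) := fun i => (s.equivFin.symm i : Sym2 (Fin n)) with hg
  have hginj : Function.Injective g := fun i j h =>
    s.equivFin.symm.injective (Subtype.ext h)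
  set σ := Tuple.sort (fun i => -b (g i)) with hσ
  set e' : Fin m → Sym2 (Fin n) := fun i => g (σ i) with he'
  have he'inj : Function.Injective e' := hginj.comp σ.injective
  have he's : ∀ i, e' i ∈ G.edgeSet := by
    intro i
    have := (s.equivFin.symm (σ i)).2
    exact (Finset.mem_filter.1 this).2
  have hanti : ∀ i j : Fin m, i ≤ j → b (e' j) ≤ b (e' i) := by
    intro i j hij
    have := Tuple.monotone_sort (fun i => -b (g i)) hij
    simp only [Function.comp_apply] at this
    simpa using this
  -- pointwise bound
  have hpoint : ∀ i : Fin m, b (e' i) ^ 2 * ((i : ℝ) + 1) ≤ 2 * (C * q) ^ 2 := by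
    intro i
    have hcore := core G b C q (b (e' i)) hCq hF (Finset.image e' (Finset.Iic i))
      (by
        intro e he
        obtain ⟨j, _, rfl⟩ := Finset.mem_image.1 he
        exact he's j)
      (hb _)
      (by
        intro e he
        obtain ⟨j, hj, rfl⟩ := Finset.mem_image.1 he
        exact hanti j i (Finset.mem_Iic.1 hj))
    rw [Finset.card_image_of_injective _ he'inj, Fin.card_Iic] at hcore
    push_cast at hcore
    convert hcore using 2
  -- rewrite sum over s as sum over Fin m
  have hsum : ∑ e ∈ s, (b e) ^ 2 = ∑ i : Fin m, (b (e' i)) ^ 2 := by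
    rw [← Finset.sum_attach s (fun e => (b e) ^ 2)]
    exact (Fintype.sum_equiv (σ.trans s.equivFin.symm)
      (fun i => (b (e' i)) ^ 2) (fun x => (b ↑x) ^ 2) (fun i => rfl)).symm
  -- harmonic bound
  have hharm : ∑ i : Fin m, (1 : ℝ) / ((i : ℝ) + 1) ≤ 1 + Real.log m := by
    have h1 : ∑ i : Fin m, (1 : ℝ) / ((i : ℝ) + 1) = ((harmonic m : ℚ) : ℝ) := by
      rw [Fin.sum_univ_eq_sum_range (fun i => (1 : ℝ) / ((i : ℝ) + 1)), harmonic]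
      push_cast
      simp [one_div]
    rw [h1]
    exact_mod_cast harmonic_le_one_add_log m
  have hmain : ∑ i : Fin m, (b (e' i)) ^ 2 ≤ 2 * (C * q) ^ 2 * (1 + Real.log m) := by
    calc ∑ i : Fin m, (b (e' i)) ^ 2
        ≤ ∑ i : Fin m, 2 * (C * q) ^ 2 * (1 / ((i : ℝ) + 1)) := by
          apply Finset.sum_le_sum
          intro i _
          have hipos : (0 : ℝ) < (i : ℝ) + 1 := by positivity
          rw [mul_one_div, le_div_iff₀ hipos]
          exact hpoint i
      _ = 2 * (C * q) ^ 2 * ∑ i : Fin m, (1 : ℝ) / ((i : ℝ) + 1) := by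
          rw [Finset.mul_sum]
      _ ≤ 2 * (C * q) ^ 2 * (1 + Real.log m) := by
          apply mul_le_mul_of_nonneg_left hharm (by positivity)
  -- m ≤ n^2
  have hmn : (m : ℝ) ≤ (n : ℝ) ^ 2 := by
    have hfs : s = G.edgeSet.toFinset := by
      ext e
      simp [hs, Set.mem_toFinset]
    have h1 : m = G.edgeSet.ncard := by
      rw [Set.ncard_eq_toFinset_card', hm, hfs]
    have h2 : m ≤ n ^ 2 := by
      rw [h1]
      exact hE.trans (Nat.div_le_self _ _)
    exact_mod_cast h2
  have hlogm : Real.log m ≤ 2 * Real.log n := by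
    rcases Nat.eq_zero_or_pos m with h0 | hpos
    · rw [h0]
      simp only [Nat.cast_zero, Real.log_zero]
      positivity
    · calc Real.log m ≤ Real.log ((n : ℝ) ^ 2) :=
            Real.log_le_log (by exact_mod_cast hpos) hmn
        _ = 2 * Real.log n := by rw [Real.log_pow]; push_cast; ring
  have hlogn : Real.log 2 ≤ Real.log n :=
    Real.log_le_log (by norm_num) (by exact_mod_cast hn)
  -- finish
  have hfin : (1 : ℝ) + Real.log m ≤ (1 / Real.log 2) * Real.log n + 2 * Real.log n := by
    have h1 : (1 : ℝ) ≤ (1 / Real.log 2) * Real.log n := by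
      rw [one_div, inv_mul_eq_div, le_div_iff₀ hlog2]
      linarith
    linarith
  calc ∑ e ∈ Finset.univ.filter (fun e => e ∈ G.edgeSet), (b e) ^ 2
      = ∑ i : Fin m, (b (e' i)) ^ 2 := by rw [← hsum]
    _ ≤ 2 * (C * q) ^ 2 * (1 + Real.log m) := hmain
    _ ≤ 2 * (C * q) ^ 2 * ((1 / Real.log 2) * Real.log n + 2 * Real.log n) :=
        mul_le_mul_of_nonneg_left hfin (by positivity)
    _ = 2 * C ^ 2 * (2 + 1 / Real.log 2) * q ^ 2 * Real.log n := by ring
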